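/- Let δ = 2^{−log 2}. Suppose π is a probability measure on the all-positive states {(m,n) ∈ ℤ² : m ≥ 1, n ≥ 1} and λ ∈ (0,1) satisfies Σ_{(i,j)} π(i,j)·Q((i,j),(m,n)) = λ·π(m,n) for all m, n ≥ 1, where Q is the transition matrix of the stochastic Ricker competition chain restricted to the all-positive states. Then λ ≤ 1 − δ^{1/K + 1/K̃}. -/

import Mathlib

open Filter

/-- The modified offspring distribution: given inhibition exponent c, the litter size has
P(ξ = k) = e^{−c}·q(k) for k ≥ 1 and P(ξ = 0) = 1 − e^{−c}·(1 − q(0)). -/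
noncomputable def modPMF (c : ℝ) (q : ℕ → ℝ) : ℕ → ℝ :=
  fun k => if k = 0 then 1 - Real.exp (-c) * (1 - q 0) else Real.exp (-c) * q k

/-- `convPow f m` is the m-fold convolution power of the pmf `f` on ℕ: the distribution of
the sum of m i.i.d. random variables with pmf `f` (the point mass at 0 when m = 0). -/
noncomputable def convPow (f : ℕ → ℝ) : ℕ → ℕ → ℝ
  | 0, k => if k = 0 then 1 else 0
  | m + 1, k => ∑ i ∈ Finset.range (k + 1), f i * convPow f m (k - i)

/-- The transition probabilities of the stochastic Ricker competition chain (U_t, V_t) on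
ℤ_{≥0}²: from (m,n), U_{t+1} is a sum of m i.i.d. litters with pmf `modPMF (K(m+bn)) q` and,
independently, V_{t+1} is a sum of n i.i.d. litters with pmf `modPMF (K̃(am+n)) q̃`
(a coordinate equal to 0 stays 0). -/
noncomputable def rickerKernel (a b K K' : ℝ) (q q' : ℕ → ℝ) :
    ℕ × ℕ → ℕ × ℕ → ℝ :=
  fun p p' =>
    convPow (modPMF (K * ((p.1 : ℝ) + b * (p.2 : ℝ))) q) p.1 p'.1 *
    convPow (modPMF (K' * (a * (p.1 : ℝ) + (p.2 : ℝ))) q') p.2 p'.2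

/-- t-step transition probabilities of a Markov kernel on ℤ_{≥0}². -/
noncomputable def kernelPow (P : ℕ × ℕ → ℕ × ℕ → ℝ) : ℕ → ℕ × ℕ → ℕ × ℕ → ℝ
  | 0, p, p' => if p = p' then 1 else 0
  | t + 1, p, p' => ∑' s : ℕ × ℕ, P p s * kernelPow P t s p'

/-- `IsQSD P π lam` : π is a quasi-stationary distribution of the chain with transition
probabilities `P`, with eigenvalue `lam`: π is a probability distribution supported on
the all-positive states {(m,n) : m ≥ 1, n ≥ 1}, and π·Q = lam·π where Q is the
restriction of P to the all-positive states. -/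
def IsQSD (P : ℕ × ℕ → ℕ × ℕ → ℝ) (π : ℕ × ℕ → ℝ) (lam : ℝ) : Prop :=
  (∀ p, 0 ≤ π p) ∧
  (∀ p : ℕ × ℕ, p.1 = 0 ∨ p.2 = 0 → π p = 0) ∧
  HasSum π 1 ∧
  (∀ p : ℕ × ℕ, 1 ≤ p.1 → 1 ≤ p.2 →
    HasSum (fun s : ℕ × ℕ => π s * P s p) (lam * π p))

/-- δ = 2^{-log 2}, the minimum over x > 0 of (1 - e^{-x})^x. -/
noncomputable def rickerDelta : ℝ := (2 : ℝ) ^ (-Real.log 2)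

/-! ### Auxiliary analytic lemmas -/

lemma aux_hasDerivAt_h {x : ℝ} (hx0 : 0 < x) (hx1 : x < 1) :
    HasDerivAt (fun t : ℝ => (1 - t) * Real.log (1 - t) - t * Real.log t)
      ((-Real.log (1 - x) - 1) - (Real.log x + 1)) x := by
  have h1 : (0:ℝ) < 1 - x := by linarith
  have d1 : HasDerivAt (fun t : ℝ => (1 - t) * Real.log (1 - t)) (-Real.log (1 - x) - 1) x := by
    have dz : HasDerivAt (fun t : ℝ => 1 - t) (-1) x := by
      simpa using (hasDerivAt_id x).const_sub 1
    have := (Real.hasDerivAt_mul_log h1.ne').comp x dz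
    refine this.congr_deriv ?_
    ring
  exact d1.sub (Real.hasDerivAt_mul_log hx0.ne')

lemma aux_h_nonneg {t : ℝ} (ht0 : 0 < t) (ht : t ≤ 1/2) :
    t * Real.log t ≤ (1 - t) * Real.log (1 - t) := by
  have h1t : (0:ℝ) < 1 - t := by linarith
  rcases le_or_gt t (Real.exp (-1)) with hcase | hcase
  · have hlt : Real.log t ≤ -1 := by
      calc Real.log t ≤ Real.log (Real.exp (-1)) :=
            Real.log_le_log ht0 hcase
        _ = -1 := Real.log_exp _
    have h2 : t * Real.log t ≤ -t := by nlinarith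
    have h3 : -t ≤ (1 - t) * Real.log (1 - t) := by
      have := Real.log_le_sub_one_of_pos (x := (1-t)⁻¹) (by positivity)
      rw [Real.log_inv] at this
      have h4 : -Real.log (1-t) ≤ (1-t)⁻¹ - 1 := this
      have h5 : (1-t) * ((1-t)⁻¹ - 1) = t := by field_simp; ring
      nlinarith [mul_le_mul_of_nonneg_left h4 h1t.le]
    linarith
  · set h : ℝ → ℝ := fun t => (1 - t) * Real.log (1 - t) - t * Real.log t with hh
    have hanti : AntitoneOn h (Set.Icc (Real.exp (-1)) (1/2)) := by
      apply antitoneOn_of_hasDerivWithinAt_nonpos (f' := fun x =>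
          (-Real.log (1 - x) - 1) - (Real.log x + 1)) (convex_Icc _ _)
      · apply ContinuousOn.sub
        · apply ContinuousOn.mul (by fun_prop)
          apply ContinuousOn.log (by fun_prop)
          intro x hx
          have : x ≤ 1/2 := hx.2
          intro hc; rw [sub_eq_zero] at hc; linarith
        · apply ContinuousOn.mul (by fun_prop)
          apply ContinuousOn.log (by fun_prop)
          intro x hx
          have h0 : Real.exp (-1) ≤ x := hx.1
          have := Real.exp_pos (-1)
          intro hc; rw [hc] at h0; linarith
      · intro x hx
        rw [interior_Icc] at hx
        have hx0 : 0 < x := lt_of_lt_of_le (Real.exp_pos _) hx.1.le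
        have hx1 : x < 1 := by have := hx.2; linarith
        exact (aux_hasDerivAt_h hx0 hx1).hasDerivWithinAt
      · intro x hx
        rw [interior_Icc] at hx
        have hx0 : Real.exp (-1) < x := hx.1
        have hx2 : x < 1/2 := hx.2
        have hxpos : 0 < x := lt_trans (Real.exp_pos _) hx0
        have h1x : (0:ℝ) < 1 - x := by linarith
        have key : -2 ≤ Real.log x + Real.log (1 - x) := by
          have e1 : Real.log (Real.exp (-1)) ≤ Real.log x := Real.log_le_log (Real.exp_pos _) hx0.le
          rw [Real.log_exp] at e1
          have e2 : Real.log (1/2 : ℝ) ≤ Real.log (1 - x) := by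
            apply Real.log_le_log (by norm_num)
            linarith
          have e3 : -1 ≤ Real.log (1/2 : ℝ) := by
            rw [show (1/2 : ℝ) = (Real.exp (-1)) * (Real.exp 1 / 2) by
              rw [Real.exp_neg]; field_simp]
            rw [Real.log_mul (Real.exp_pos _).ne' (by positivity), Real.log_exp]
            have : (0:ℝ) ≤ Real.log (Real.exp 1 / 2) := by
              apply Real.log_nonneg
              have := Real.add_one_le_exp 1
              linarith
            linarith
          linarith
        linarith
    have := hanti ⟨hcase.le, ht⟩ ⟨le_of_lt (lt_of_lt_of_le hcase ht), le_refl _⟩ ht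
    have h12 : h (1/2 : ℝ) = 0 := by norm_num [hh]
    have : 0 ≤ h t := by rw [← h12]; exact this
    simp only [hh] at this
    linarith

lemma aux_G_le {u : ℝ} (hu0 : 0 < u) (hu1 : u < 1) :
    Real.log u * Real.log (1 - u) ≤ (Real.log 2) ^ 2 := by
  suffices H : ∀ v : ℝ, 0 < v → v ≤ 1/2 → Real.log v * Real.log (1 - v) ≤ (Real.log 2)^2 by
    rcases le_or_gt u (1/2) with h | h
    · exact H u hu0 h
    · have := H (1 - u) (by linarith) (by linarith)
      rw [show (1 : ℝ) - (1 - u) = u by ring] at this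
      linarith [this, mul_comm (Real.log (1 - u)) (Real.log u)]
  intro v hv0 hv
  have hmono : MonotoneOn (fun x : ℝ => Real.log x * Real.log (1 - x)) (Set.Icc v (1/2)) := by
    apply monotoneOn_of_hasDerivWithinAt_nonneg (f' := fun x =>
        ((1 - x) * Real.log (1 - x) - x * Real.log x) / (x * (1 - x))) (convex_Icc _ _)
    · apply ContinuousOn.mul
      · apply ContinuousOn.log (by fun_prop)
        intro x hx; have := hx.1; intro hc; rw [hc] at this; linarith
      · apply ContinuousOn.log (by fun_prop)
        intro x hx; have := hx.2
        intro hc; rw [sub_eq_zero] at hc; linarith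
    · intro x hx
      rw [interior_Icc] at hx
      have hx0 : 0 < x := lt_trans hv0 hx.1
      have hx1 : (0:ℝ) < 1 - x := by have := hx.2; linarith
      have d : HasDerivAt (fun x : ℝ => Real.log x * Real.log (1 - x))
          (x⁻¹ * Real.log (1 - x) + Real.log x * (-(1 - x)⁻¹)) x := by
        have dlog : HasDerivAt Real.log x⁻¹ x := Real.hasDerivAt_log hx0.ne'
        have dz : HasDerivAt (fun t : ℝ => 1 - t) (-1) x := by
          simpa using (hasDerivAt_id x).const_sub 1
        have dlog2 : HasDerivAt (fun t : ℝ => Real.log (1 - t)) ((1-x)⁻¹ * (-1)) x :=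
          (Real.hasDerivAt_log hx1.ne').comp x dz
        have := dlog.mul dlog2
        refine this.congr_deriv ?_
        ring
      have heq : x⁻¹ * Real.log (1 - x) + Real.log x * (-(1 - x)⁻¹)
          = ((1 - x) * Real.log (1 - x) - x * Real.log x) / (x * (1 - x)) := by
        field_simp
        ring
      rw [heq] at d
      exact d.hasDerivWithinAt
    · intro x hx
      rw [interior_Icc] at hx
      have hx0 : 0 < x := lt_trans hv0 hx.1
      have hx2 : x < 1/2 := hx.2
      have hx1 : (0:ℝ) < 1 - x := by linarith
      apply div_nonneg _ (by positivity)
      have := aux_h_nonneg hx0 hx2.le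
      linarith
  have := hmono ⟨le_refl v, hv⟩ ⟨hv, le_refl _⟩ hv
  simp only at this
  calc Real.log v * Real.log (1 - v) ≤ Real.log (1/2 : ℝ) * Real.log (1 - 1/2 : ℝ) := this
    _ = (Real.log 2)^2 := by
        norm_num [Real.log_div, Real.log_inv]
        ring

lemma rickerDelta_pos : 0 < rickerDelta := Real.rpow_pos_of_pos (by norm_num) _

lemma aux_delta_le {x : ℝ} (hx : 0 < x) :
    rickerDelta ≤ (1 - Real.exp (-x)) ^ (x : ℝ) := by
  have hu0 : 0 < Real.exp (-x) := Real.exp_pos _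
  have hu1 : Real.exp (-x) < 1 := by
    rw [Real.exp_lt_one_iff]; linarith
  have hb : (0:ℝ) < 1 - Real.exp (-x) := by linarith
  rw [rickerDelta, Real.rpow_def_of_pos (by norm_num : (0:ℝ) < 2),
    Real.rpow_def_of_pos hb]
  apply Real.exp_le_exp.2
  have hG := aux_G_le hu0 hu1
  rw [Real.log_exp] at hG
  nlinarith [hG]

lemma aux_delta_pow {K : ℝ} (hK : 0 < K) {m : ℕ} (hm : 1 ≤ m) {c : ℝ} (hc : K * m ≤ c) :
    rickerDelta ^ (1 / K) ≤ (1 - Real.exp (-c)) ^ m := by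
  set x : ℝ := K * m with hx
  have hxpos : 0 < x := by
    apply mul_pos hK
    exact_mod_cast Nat.pos_of_ne_zero (by omega)
  have hb : (0:ℝ) < 1 - Real.exp (-x) := by
    have : Real.exp (-x) < 1 := by rw [Real.exp_lt_one_iff]; linarith
    linarith
  have step1 : rickerDelta ^ (1 / K) ≤ ((1 - Real.exp (-x)) ^ (x:ℝ)) ^ (1 / K) :=
    Real.rpow_le_rpow rickerDelta_pos.le (aux_delta_le hxpos) (by positivity)
  have step2 : ((1 - Real.exp (-x)) ^ (x:ℝ)) ^ (1 / K) = (1 - Real.exp (-x)) ^ m := by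
    rw [← Real.rpow_natCast (1 - Real.exp (-x)) m, ← Real.rpow_mul hb.le]
    congr 1
    rw [hx]
    field_simp
  rw [step2] at step1
  refine le_trans step1 ?_
  apply pow_le_pow_left₀ hb.le
  have : Real.exp (-c) ≤ Real.exp (-x) := Real.exp_le_exp.2 (by linarith)
  linarith

/-! ### pmf lemmas -/

lemma modPMF_nonneg {c : ℝ} (hc : 0 ≤ c) {q : ℕ → ℝ} (hq : ∀ k, 0 ≤ q k) (hq0 : q 0 ≤ 1) :
    ∀ k, 0 ≤ modPMF c q k := by
  intro k
  unfold modPMF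
  split
  · have h1 : Real.exp (-c) ≤ 1 := Real.exp_le_one_iff.2 (by linarith)
    have h2 : Real.exp (-c) * (1 - q 0) ≤ 1 * 1 :=
      mul_le_mul h1 (by linarith [hq 0]) (by linarith) zero_le_one
    linarith
  · exact mul_nonneg (Real.exp_pos _).le (hq _)

lemma modPMF_hasSum {c : ℝ} {q : ℕ → ℝ} (hq1 : HasSum q 1) :
    HasSum (modPMF c q) 1 := by
  have h1 : HasSum (fun k => Real.exp (-c) * q k) (Real.exp (-c) * 1) := hq1.mul_left _
  have h2 : HasSum (fun k : ℕ => (1 - Real.exp (-c)) * (if k = 0 then (1:ℝ) else 0))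
      ((1 - Real.exp (-c)) * 1) := (hasSum_ite_eq 0 (1:ℝ)).mul_left _
  have h3 := h1.add h2
  have heq : (fun k : ℕ => Real.exp (-c) * q k
      + (1 - Real.exp (-c)) * (if k = 0 then (1:ℝ) else 0)) = modPMF c q := by
    funext k
    unfold modPMF
    by_cases h : k = 0 <;> simp [h] <;> ring
  rw [heq] at h3
  convert h3 using 1
  ring

lemma modPMF_zero_ge {c : ℝ} {q : ℕ → ℝ} (hq : ∀ k, 0 ≤ q k) :
    1 - Real.exp (-c) ≤ modPMF c q 0 := by
  unfold modPMF
  rw [if_pos rfl]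
  have : Real.exp (-c) * (1 - q 0) ≤ Real.exp (-c) * 1 := by
    apply mul_le_mul_of_nonneg_left _ (Real.exp_pos _).le
    linarith [hq 0]
  linarith

lemma convPow_nonneg {f : ℕ → ℝ} (hf : ∀ k, 0 ≤ f k) : ∀ m k, 0 ≤ convPow f m k := by
  intro m
  induction m with
  | zero => intro k; unfold convPow; split <;> norm_num
  | succ m ih =>
    intro k
    unfold convPow
    exact Finset.sum_nonneg fun i _ => mul_nonneg (hf i) (ih _)

lemma convPow_hasSum {f : ℕ → ℝ} (hf : ∀ k, 0 ≤ f k) (hf1 : HasSum f 1) :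
    ∀ m, HasSum (convPow f m) 1 := by
  intro m
  induction m with
  | zero => exact hasSum_ite_eq 0 (1:ℝ)
  | succ m ih =>
    have hfn : Summable (fun k => ‖f k‖) := by
      have : (fun k => ‖f k‖) = f := by
        funext k; rw [Real.norm_eq_abs, abs_of_nonneg (hf k)]
      rw [this]; exact hf1.summable
    have hgn : Summable (fun k => ‖convPow f m k‖) := by
      have : (fun k => ‖convPow f m k‖) = convPow f m := by
        funext k; rw [Real.norm_eq_abs, abs_of_nonneg (convPow_nonneg hf m k)]
      rw [this]; exact ih.summable
    have h := hasSum_sum_range_mul_of_summable_norm hfn hgn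
    rw [hf1.tsum_eq, ih.tsum_eq, one_mul] at h
    exact h

lemma convPow_zero_val {f : ℕ → ℝ} : ∀ m, convPow f m 0 = f 0 ^ m := by
  intro m
  induction m with
  | zero => simp [convPow]
  | succ m ih =>
    show (∑ i ∈ Finset.range (0 + 1), f i * convPow f m (0 - i)) = f 0 ^ (m+1)
    simp [ih]
    ring

/-- Any quasi-stationary eigenvalue λ of the stochastic Ricker competition chain
satisfies λ ≤ 1 − δ^{1/K + 1/K̃}. -/
theorem qsd_eigenvalue_le
    (r r' a b K K' : ℝ) (ha : 0 < a) (hb : 0 < b) (hK : 0 < K) (hK' : 0 < K')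
    (q q' : ℕ → ℝ)
    (hq : ∀ k, 0 ≤ q k) (hq1 : HasSum q 1)
    (hqmean : HasSum (fun k : ℕ => (k : ℝ) * q k) (Real.exp r))
    (hqvar : ∃ v : ℝ, HasSum (fun k : ℕ => (k : ℝ) ^ 2 * q k) v)
    (hq' : ∀ k, 0 ≤ q' k) (hq1' : HasSum q' 1)
    (hqmean' : HasSum (fun k : ℕ => (k : ℝ) * q' k) (Real.exp r'))
    (hqvar' : ∃ v : ℝ, HasSum (fun k : ℕ => (k : ℝ) ^ 2 * q' k) v)
    (π : ℕ × ℕ → ℝ) (lam : ℝ) (hlam0 : 0 < lam) (hlam1 : lam < 1)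
    (hπ : IsQSD (rickerKernel a b K K' q q') π lam) :
    lam ≤ 1 - rickerDelta ^ (1 / K + 1 / K') := by
  obtain ⟨hπ0, hπsupp, hπ1, hπeig⟩ := hπ
  set P := rickerKernel a b K K' q q' with hP
  set ε : ℝ := rickerDelta ^ (1 / K + 1 / K') with hε
  have hq0le : q 0 ≤ 1 := le_hasSum hq1 0 (fun i _ => hq i)
  have hq0le' : q' 0 ≤ 1 := le_hasSum hq1' 0 (fun i _ => hq' i)
  have hcnn : ∀ s : ℕ × ℕ, 0 ≤ K * ((s.1 : ℝ) + b * (s.2 : ℝ)) := by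
    intro s; positivity
  have hcnn' : ∀ s : ℕ × ℕ, 0 ≤ K' * (a * (s.1 : ℝ) + (s.2 : ℝ)) := by
    intro s; positivity
  have hPnn : ∀ s p : ℕ × ℕ, 0 ≤ P s p := by
    intro s p
    exact mul_nonneg (convPow_nonneg (modPMF_nonneg (hcnn s) hq hq0le) _ _)
      (convPow_nonneg (modPMF_nonneg (hcnn' s) hq' hq0le') _ _)
  -- each row of the kernel sums to 1
  have hProw : ∀ s : ℕ × ℕ, HasSum (P s) 1 := by
    intro s
    have hF : HasSum (convPow (modPMF (K * ((s.1 : ℝ) + b * (s.2 : ℝ))) q) s.1) 1 :=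
      convPow_hasSum (modPMF_nonneg (hcnn s) hq hq0le) (modPMF_hasSum hq1) s.1
    have hG : HasSum (convPow (modPMF (K' * (a * (s.1 : ℝ) + (s.2 : ℝ))) q') s.2) 1 :=
      convPow_hasSum (modPMF_nonneg (hcnn' s) hq' hq0le') (modPMF_hasSum hq1') s.2
    have hsummable : Summable (fun p : ℕ × ℕ =>
        convPow (modPMF (K * ((s.1 : ℝ) + b * (s.2 : ℝ))) q) s.1 p.1 *
        convPow (modPMF (K' * (a * (s.1 : ℝ) + (s.2 : ℝ))) q') s.2 p.2) :=
      Summable.mul_of_nonneg hF.summable hG.summable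
        (fun k => convPow_nonneg (modPMF_nonneg (hcnn s) hq hq0le) _ _)
        (fun k => convPow_nonneg (modPMF_nonneg (hcnn' s) hq' hq0le') _ _)
    have h1 := hsummable.hasSum
    have h2 : (1 : ℝ) * 1 = ∑' p : ℕ × ℕ,
        convPow (modPMF (K * ((s.1 : ℝ) + b * (s.2 : ℝ))) q) s.1 p.1 *
        convPow (modPMF (K' * (a * (s.1 : ℝ) + (s.2 : ℝ))) q') s.2 p.2 :=
      HasSum.mul_eq hF hG h1
    rw [one_mul] at h2
    rw [← h2] at h1
    exact h1
  -- the atom at (0,0)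
  have hatom : ∀ s : ℕ × ℕ, 1 ≤ s.1 → 1 ≤ s.2 → ε ≤ P s (0, 0) := by
    intro s h1 h2
    have hc1 : K * (s.1 : ℝ) ≤ K * ((s.1 : ℝ) + b * (s.2 : ℝ)) := by
      apply mul_le_mul_of_nonneg_left _ hK.le
      have : (0:ℝ) ≤ b * (s.2 : ℝ) := by positivity
      linarith
    have hc2 : K' * (s.2 : ℝ) ≤ K' * (a * (s.1 : ℝ) + (s.2 : ℝ)) := by
      apply mul_le_mul_of_nonneg_left _ hK'.le
      have : (0:ℝ) ≤ a * (s.1 : ℝ) := by positivity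
      linarith
    have hA := aux_delta_pow hK h1 hc1
    have hB := aux_delta_pow hK' h2 hc2
    -- positivity facts
    have hcp1 : (0:ℝ) < K * ((s.1 : ℝ) + b * (s.2 : ℝ)) := by
      have h1' : (1:ℝ) ≤ (s.1 : ℝ) := by exact_mod_cast h1
      have : (0:ℝ) ≤ b * (s.2 : ℝ) := by positivity
      nlinarith
    have hcp2 : (0:ℝ) < K' * (a * (s.1 : ℝ) + (s.2 : ℝ)) := by
      have h2' : (1:ℝ) ≤ (s.2 : ℝ) := by exact_mod_cast h2
      have : (0:ℝ) ≤ a * (s.1 : ℝ) := by positivity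
      nlinarith
    have hbase1 : (0:ℝ) ≤ 1 - Real.exp (-(K * ((s.1 : ℝ) + b * (s.2 : ℝ)))) := by
      have : Real.exp (-(K * ((s.1 : ℝ) + b * (s.2 : ℝ)))) ≤ 1 :=
        Real.exp_le_one_iff.2 (by linarith)
      linarith
    have hbase2 : (0:ℝ) ≤ 1 - Real.exp (-(K' * (a * (s.1 : ℝ) + (s.2 : ℝ)))) := by
      have : Real.exp (-(K' * (a * (s.1 : ℝ) + (s.2 : ℝ)))) ≤ 1 :=
        Real.exp_le_one_iff.2 (by linarith)
      linarith
    have hval : P s (0, 0) =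
        (modPMF (K * ((s.1 : ℝ) + b * (s.2 : ℝ))) q 0) ^ s.1 *
        (modPMF (K' * (a * (s.1 : ℝ) + (s.2 : ℝ))) q' 0) ^ s.2 := by
      show convPow _ s.1 0 * convPow _ s.2 0 = _
      rw [convPow_zero_val, convPow_zero_val]
    have hA' : rickerDelta ^ (1 / K) ≤
        (modPMF (K * ((s.1 : ℝ) + b * (s.2 : ℝ))) q 0) ^ s.1 :=
      le_trans hA (pow_le_pow_left₀ hbase1 (modPMF_zero_ge hq) _)
    have hB' : rickerDelta ^ (1 / K') ≤
        (modPMF (K' * (a * (s.1 : ℝ) + (s.2 : ℝ))) q' 0) ^ s.2 :=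
      le_trans hB (pow_le_pow_left₀ hbase2 (modPMF_zero_ge hq') _)
    have hεeq : ε = rickerDelta ^ (1 / K) * rickerDelta ^ (1 / K') := by
      rw [hε, Real.rpow_add rickerDelta_pos]
    rw [hεeq, hval]
    apply mul_le_mul hA' hB' (Real.rpow_pos_of_pos rickerDelta_pos _).le
    exact le_trans (Real.rpow_pos_of_pos rickerDelta_pos _).le hA'
  -- restrict π to the positive states
  have hsupp : Function.support π ⊆ {p : ℕ × ℕ | 1 ≤ p.1 ∧ 1 ≤ p.2} := by
    intro p hp
    simp only [Function.mem_support] at hp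
    constructor
    · by_contra h; exact hp (hπsupp p (Or.inl (by omega)))
    · by_contra h; exact hp (hπsupp p (Or.inr (by omega)))
  have hPis : HasSum (fun p : {p : ℕ × ℕ | 1 ≤ p.1 ∧ 1 ≤ p.2} => π p) 1 :=
    (hasSum_subtype_iff_of_support_subset hsupp).2 hπ1
  have hLams : HasSum (fun p : {p : ℕ × ℕ | 1 ≤ p.1 ∧ 1 ≤ p.2} => lam * π p) lam := by
    simpa using hPis.mul_left lam
  -- finite partial-sum bound
  have key : ∀ F : Finset {p : ℕ × ℕ | 1 ≤ p.1 ∧ 1 ≤ p.2},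
      ∑ p ∈ F, lam * π ↑p ≤ 1 - ε := by
    intro F
    have hsum_each : ∀ p' ∈ F, Summable (fun s : ℕ × ℕ => π s * P s ↑p') := by
      intro p' _
      exact (hπeig ↑p' p'.2.1 p'.2.2).summable
    have e1 : ∑ p' ∈ F, lam * π ↑p' = ∑ p' ∈ F, ∑' s : ℕ × ℕ, π s * P s ↑p' := by
      refine Finset.sum_congr rfl fun p' _ => ?_
      exact ((hπeig ↑p' p'.2.1 p'.2.2).tsum_eq).symm
    have e2 : ∑ p' ∈ F, ∑' s : ℕ × ℕ, π s * P s ↑p'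
        = ∑' s : ℕ × ℕ, ∑ p' ∈ F, π s * P s ↑p' := (Summable.tsum_finsetSum hsum_each).symm
    have e3 : ∀ s : ℕ × ℕ, ∑ p' ∈ F, π s * P s ↑p' = π s * ∑ p' ∈ F, P s ↑p' := by
      intro s
      rw [Finset.mul_sum]
    have hbnd : ∀ s : ℕ × ℕ, π s * ∑ p' ∈ F, P s ↑p' ≤ π s * (1 - ε) := by
      intro s
      rcases eq_or_lt_of_le (hπ0 s) with h0 | h0
      · rw [← h0]; simp
      · have hmem : s ∈ Function.support π := by
          simp only [Function.mem_support]
          exact ne_of_gt h0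
        have hpos := hsupp hmem
        apply mul_le_mul_of_nonneg_left _ (hπ0 s)
        have himg : ∑ p' ∈ F, P s ↑p' = ∑ p ∈ F.image Subtype.val, P s p := by
          rw [Finset.sum_image]
          intro x _ y _ hxy
          exact Subtype.ext hxy
        have hnotmem : ((0, 0) : ℕ × ℕ) ∉ F.image Subtype.val := by
          intro hmem'
          rcases Finset.mem_image.1 hmem' with ⟨x, _, hx⟩
          have := x.2.1
          rw [hx] at this
          exact absurd this (by norm_num)
        have hsub : ∑ p ∈ insert ((0, 0) : ℕ × ℕ) (F.image Subtype.val), P s p ≤ 1 :=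
          sum_le_hasSum _ (fun i _ => hPnn s i) (hProw s)
        rw [Finset.sum_insert hnotmem] at hsub
        have hat := hatom s hpos.1 hpos.2
        rw [himg]
        linarith
    calc ∑ p' ∈ F, lam * π ↑p'
        = ∑' s : ℕ × ℕ, π s * ∑ p' ∈ F, P s ↑p' := by
          rw [e1, e2]; exact tsum_congr e3
      _ ≤ ∑' s : ℕ × ℕ, π s * (1 - ε) := by
          apply Summable.tsum_le_tsum hbnd ?_ ?_
          · have heq : (fun s : ℕ × ℕ => π s * ∑ p' ∈ F, P s ↑p')
                = fun s : ℕ × ℕ => ∑ p' ∈ F, π s * P s ↑p' := funext fun s => (e3 s).symm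
            rw [heq]
            exact summable_sum hsum_each
          · exact hπ1.summable.mul_right _
      _ = 1 - ε := by
          rw [tsum_mul_right, hπ1.tsum_eq, one_mul]
  exact le_of_tendsto' hLams key
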